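/- Let X be a Banach space with the Daugavet property with respect to a norming subspace Y ⊆ X*. Then for any x₁,…,x_n ∈ S_X, ε > 0, weights λ_i > 0 with Σλ_i = 1, and any g ∈ S_Y, there exist f₁,…,f_n ∈ S_Y with f_i ∈ S(B_{X*}, x_i, ε) for each i, such that ‖g + Σ λ_i f_i‖ ≥ 2 − ε. -/

import Mathlib

open scoped BigOperators
open Metric

noncomputable section

/-- `X` has the Daugavet property with respect to the subspace `Y` of `X*`. -/
def DaugavetWrt (X : Type*) [NormedAddCommGroup X] [NormedSpace ℝ X]
    (Y : Subspace ℝ (StrongDual ℝ X)) : Prop :=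
  ∀ x : X, ∀ g ∈ Y,
    ‖ContinuousLinearMap.id ℝ X + g.smulRight x‖ = 1 + ‖g.smulRight x‖

/-- `Y ⊆ X*` is a norming subspace. -/
def IsNorming (X : Type*) [NormedAddCommGroup X] [NormedSpace ℝ X]
    (Y : Subspace ℝ (StrongDual ℝ X)) : Prop :=
  ∀ x : X, ‖x‖ = sSup {r : ℝ | ∃ g ∈ Y, ‖g‖ ≤ 1 ∧ r = |g x|}

/-- The weak-star slice of the dual unit ball determined by `x` and `ε`. -/
def wSlice {X : Type*} [NormedAddCommGroup X] [NormedSpace ℝ X] (x : X) (ε : ℝ) :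
    Set (StrongDual ℝ X) :=
  {f | ‖f‖ ≤ 1 ∧ 1 - ε < f x}

lemma lemA {X : Type*} [NormedAddCommGroup X] [NormedSpace ℝ X]
    {Y : Subspace ℝ (StrongDual ℝ X)}
    (hnorming : IsNorming X Y) (hD : DaugavetWrt X Y)
    {g : StrongDual ℝ X} (hgY : g ∈ Y) (hg : ‖g‖ = 1)
    {x : X} (hx : ‖x‖ = 1) {δ : ℝ} (hδ : 0 < δ) (hδ4 : δ ≤ 1/4) :
    ∃ f, f ∈ Y ∧ ‖f‖ = 1 ∧ 1 - δ < f x ∧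
      ∃ z : X, ‖z‖ ≤ 1 ∧ 1 - δ < g z ∧ 1 - δ < f z := by
  have hsr : ‖g.smulRight x‖ = 1 := by
    rw [ContinuousLinearMap.norm_smulRight_apply, hg, hx]; ring
  have hT : ‖ContinuousLinearMap.id ℝ X + g.smulRight x‖ = 2 := by
    rw [hD x g hgY, hsr]; norm_num
  have h2 : (2 : ℝ) - δ/2 < ‖ContinuousLinearMap.id ℝ X + g.smulRight x‖ := by
    rw [hT]; linarith
  obtain ⟨z, hz1, hz2⟩ := ContinuousLinearMap.exists_lt_apply_of_lt_opNorm _ h2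
  have hTz : (ContinuousLinearMap.id ℝ X + g.smulRight x) z = z + g z • x := by
    simp
  rw [hTz] at hz2
  have hznorm : ‖z‖ ≤ 1 := hz1.le
  have hzx : ‖z + g z • x‖ ≤ 1 + |g z| := by
    calc ‖z + g z • x‖ ≤ ‖z‖ + ‖g z • x‖ := norm_add_le _ _
      _ ≤ 1 + |g z| := by rw [norm_smul, Real.norm_eq_abs, hx]; linarith
  have hgz_abs : 1 - δ/2 < |g z| := by
    have := hz2.le.trans hzx
    linarith
  set z' := if 0 ≤ g z then z else -z with hz'def
  have hgz' : g z' = |g z| := by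
    rw [hz'def]; split_ifs with h
    · rw [abs_of_nonneg h]
    · rw [map_neg, abs_of_neg (not_le.mp h)]
  have hz'norm : ‖z'‖ ≤ 1 := by
    rw [hz'def]; split_ifs <;> simpa
  have hTz' : ‖z' + g z' • x‖ = ‖z + g z • x‖ := by
    rw [hz'def]; split_ifs with h
    · rfl
    · rw [map_neg]
      have : -z + -g z • x = -(z + g z • x) := by rw [neg_smul]; abel
      rw [this, norm_neg]
  have hgz'1 : g z' ≤ 1 := by
    calc g z' ≤ |g z'| := le_abs_self _
      _ ≤ ‖g‖ * ‖z'‖ := g.le_opNorm z'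
      _ ≤ 1 := by rw [hg]; linarith
  have hgz'lb : 1 - δ/2 < g z' := by rw [hgz']; exact hgz_abs
  have key : 2 - δ < ‖z' + x‖ := by
    have hdecomp : z' + g z' • x = (z' + x) + (g z' - 1) • x := by
      rw [sub_smul, one_smul]; abel
    have h4 : ‖z' + g z' • x‖ ≤ ‖z' + x‖ + ‖(g z' - 1) • x‖ := by
      rw [hdecomp]; exact norm_add_le _ _
    have h5 : ‖(g z' - 1) • x‖ = 1 - g z' := by
      rw [norm_smul, Real.norm_eq_abs, hx, abs_of_nonpos (by linarith)]; ring
    rw [hTz'] at h4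
    linarith [hz2]
  -- use norming subspace to find a functional almost norming z' + x
  have hsup := hnorming (z' + x)
  have hex : ∃ h, h ∈ Y ∧ ‖h‖ ≤ 1 ∧ 2 - δ < |h (z' + x)| := by
    set S := {r : ℝ | ∃ g ∈ Y, ‖g‖ ≤ 1 ∧ r = |g (z' + x)|} with hS
    have hne : S.Nonempty := ⟨0, 0, Y.zero_mem, by simp⟩
    have hbdd : BddAbove S := by
      refine ⟨‖z' + x‖, ?_⟩
      rintro r ⟨h, hY, hh, rfl⟩
      calc |h (z' + x)| = ‖h (z' + x)‖ := rfl
        _ ≤ ‖h‖ * ‖z' + x‖ := h.le_opNorm _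
        _ ≤ 1 * ‖z' + x‖ := by
            apply mul_le_mul_of_nonneg_right hh (norm_nonneg _)
        _ = ‖z' + x‖ := one_mul _
    have hlt : 2 - δ < sSup S := by rw [← hsup]; exact key
    rw [lt_csSup_iff hbdd hne] at hlt
    obtain ⟨r, ⟨h, hY, hh, rfl⟩, hr⟩ := hlt
    exact ⟨h, hY, hh, hr⟩
  obtain ⟨h, hhY, hh1, hhval⟩ := hex
  set f₀ := if 0 ≤ h (z' + x) then h else -h with hf₀def
  have hf₀Y : f₀ ∈ Y := by
    rw [hf₀def]; split_ifs
    · exact hhY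
    · exact Y.neg_mem hhY
  have hf₀1 : ‖f₀‖ ≤ 1 := by
    rw [hf₀def]; split_ifs
    · exact hh1
    · rwa [norm_neg]
  have hf₀val : 2 - δ < f₀ (z' + x) := by
    rw [hf₀def]; split_ifs with h'
    · rwa [abs_of_nonneg h'] at hhval
    · rw [ContinuousLinearMap.neg_apply]
      rwa [abs_of_neg (not_le.mp h')] at hhval
  have hf₀sum : f₀ (z' + x) = f₀ z' + f₀ x := map_add _ _ _
  have hf₀zub : f₀ z' ≤ 1 := by
    calc f₀ z' ≤ |f₀ z'| := le_abs_self _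
      _ ≤ ‖f₀‖ * ‖z'‖ := f₀.le_opNorm z'
      _ ≤ 1 := by nlinarith [norm_nonneg f₀]
  have hf₀xub : f₀ x ≤ 1 := by
    calc f₀ x ≤ |f₀ x| := le_abs_self _
      _ ≤ ‖f₀‖ * ‖x‖ := f₀.le_opNorm x
      _ ≤ 1 := by rw [hx]; linarith
  have hf₀x : 1 - δ < f₀ x := by linarith
  have hf₀z : 1 - δ < f₀ z' := by linarith
  have hf₀pos : 0 < ‖f₀‖ := by
    have : f₀ x ≤ ‖f₀‖ * ‖x‖ := (le_abs_self _).trans (f₀.le_opNorm x)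
    rw [hx, mul_one] at this
    linarith
  have hinv1 : 1 ≤ ‖f₀‖⁻¹ := by
    rw [le_inv_comm₀ one_pos hf₀pos]; simpa using hf₀1
  clear_value f₀ z'
  clear hf₀def hz'def hT h2 hTz hTz' hsup hhval hf₀val hf₀sum
  refine ⟨‖f₀‖⁻¹ • f₀, Y.smul_mem _ hf₀Y, ?_, ?_, z', hz'norm, by linarith, ?_⟩
  · rw [norm_smul, Real.norm_eq_abs, abs_of_pos (inv_pos.mpr hf₀pos)]
    field_simp
  · have hfx : (‖f₀‖⁻¹ • f₀) x = ‖f₀‖⁻¹ * f₀ x := by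
      rw [ContinuousLinearMap.smul_apply, smul_eq_mul]
    rw [hfx]
    have : f₀ x ≤ ‖f₀‖⁻¹ * f₀ x := le_mul_of_one_le_left (by linarith) hinv1
    linarith
  · have hfz : (‖f₀‖⁻¹ • f₀) z' = ‖f₀‖⁻¹ * f₀ z' := by
      rw [ContinuousLinearMap.smul_apply, smul_eq_mul]
    rw [hfz]
    have : f₀ z' ≤ ‖f₀‖⁻¹ * f₀ z' := le_mul_of_one_le_left (by linarith) hinv1
    linarith

lemma lemB {X : Type*} [NormedAddCommGroup X] [NormedSpace ℝ X]
    {Y : Subspace ℝ (StrongDual ℝ X)}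
    (hnorming : IsNorming X Y) (hD : DaugavetWrt X Y) :
    ∀ (n : ℕ) (x : Fin n → X), (∀ i, ‖x i‖ = 1) →
    ∀ (lam : Fin n → ℝ), (∀ i, 0 < lam i) →
    ∀ (g : StrongDual ℝ X), g ∈ Y → ‖g‖ = 1 →
    ∀ δ : ℝ, 0 < δ → δ ≤ 1/4 →
    ∃ f : Fin n → StrongDual ℝ X,
      (∀ i, f i ∈ Y ∧ ‖f i‖ = 1 ∧ 1 - δ < f i (x i)) ∧
      (1 + ∑ i, lam i) * (1 - δ) ^ n ≤ ‖g + ∑ i, lam i • f i‖ := by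
  intro n
  induction n with
  | zero =>
    intro x hx lam hlam g hgY hg δ hδ hδ4
    exact ⟨fun i => 0, fun i => i.elim0, by simp [hg]⟩
  | succ n ih =>
    intro x hx lam hlam g hgY hg δ hδ hδ4
    obtain ⟨f', hf', hb⟩ := ih (fun i => x i.castSucc) (fun i => hx _)
      (fun i => lam i.castSucc) (fun i => hlam _) g hgY hg δ hδ hδ4
    set v := g + ∑ i : Fin n, lam i.castSucc • f' i with hv
    have hvY : v ∈ Y :=
      Y.add_mem hgY (Submodule.sum_mem _ fun i _ => Y.smul_mem _ (hf' i).1)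
    have hS0 : 0 ≤ ∑ i : Fin n, lam i.castSucc :=
      Finset.sum_nonneg fun i _ => (hlam _).le
    have h1δ : 0 < 1 - δ := by linarith
    have hvpos : 0 < ‖v‖ := lt_of_lt_of_le (by positivity) hb
    set g' := ‖v‖⁻¹ • v with hg'def
    have hg'Y : g' ∈ Y := Y.smul_mem _ hvY
    have hg'1 : ‖g'‖ = 1 := by
      rw [hg'def, norm_smul, Real.norm_eq_abs, abs_of_pos (inv_pos.mpr hvpos)]
      field_simp
    obtain ⟨fn, hfnY, hfn1, hfnx, z, hz1, hgz, hfz⟩ :=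
      lemA hnorming hD hg'Y hg'1 (hx (Fin.last n)) hδ hδ4
    refine ⟨Fin.snoc f' fn, ?_, ?_⟩
    · intro i
      refine Fin.lastCases ?_ ?_ i
      · simpa [Fin.snoc_last] using ⟨hfnY, hfn1, hfnx⟩
      · intro j; simpa [Fin.snoc_castSucc] using hf' j
    · have hsum : g + ∑ i : Fin (n+1), lam i • (Fin.snoc f' fn : Fin (n+1) → _) i
          = v + lam (Fin.last n) • fn := by
        rw [hv, Fin.sum_univ_castSucc]
        simp only [Fin.snoc_castSucc, Fin.snoc_last]
        abel
      rw [hsum]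
      have hvz : ‖v‖ * (1 - δ) < v z := by
        have he : g' z = ‖v‖⁻¹ * v z := by
          rw [hg'def, ContinuousLinearMap.smul_apply, smul_eq_mul]
        have h2 : ‖v‖ * (1 - δ) < ‖v‖ * g' z :=
          mul_lt_mul_of_pos_left hgz hvpos
        rw [he, ← mul_assoc, mul_inv_cancel₀ (ne_of_gt hvpos), one_mul] at h2
        exact h2
      have happ : (v + lam (Fin.last n) • fn) z = v z + lam (Fin.last n) * fn z := by
        simp
      have hle : (v + lam (Fin.last n) • fn) z ≤ ‖v + lam (Fin.last n) • fn‖ := by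
        calc (v + lam (Fin.last n) • fn) z
            ≤ |(v + lam (Fin.last n) • fn) z| := le_abs_self _
          _ ≤ ‖v + lam (Fin.last n) • fn‖ * ‖z‖ :=
              (v + lam (Fin.last n) • fn).le_opNorm z
          _ ≤ ‖v + lam (Fin.last n) • fn‖ * 1 := by
              exact mul_le_mul_of_nonneg_left hz1 (norm_nonneg _)
          _ = ‖v + lam (Fin.last n) • fn‖ := mul_one _
      rw [happ] at hle
      have hp1 : (1 - δ) ^ n ≤ 1 := pow_le_one₀ h1δ.le (by linarith)
      have hp0 : 0 ≤ (1 - δ) ^ n := pow_nonneg h1δ.le n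
      have hLfn : lam (Fin.last n) * (1 - δ) ≤ lam (Fin.last n) * fn z :=
        mul_le_mul_of_nonneg_left hfz.le (hlam _).le
      have hsum' : ∑ i : Fin (n+1), lam i
          = (∑ i : Fin n, lam i.castSucc) + lam (Fin.last n) :=
        Fin.sum_univ_castSucc lam
      rw [hsum']
      set S := ∑ i : Fin n, lam i.castSucc
      set L := lam (Fin.last n)
      have hL : 0 < L := hlam _
      have hvz' : ‖v‖ * (1 - δ) < v z := hvz
      have hle' : v z + L * fn z ≤ ‖v + L • fn‖ := hle
      have hLfn' : L * (1 - δ) ≤ L * fn z := hLfn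
      have hb' : (1 + S) * (1 - δ) ^ n ≤ ‖v‖ := hb
      set a := v z with ha
      set b := L * fn z with hbb
      set c := ‖v‖ with hc
      set d := ‖v + L • fn‖ with hd
      clear_value S L a b c d
      clear ha hbb hc hd hvz hle hLfn hb hsum hsum' happ hgz hfz hfnx hg'1 hg'Y
      have h3 : (1 + S) * (1 - δ)^n * (1 - δ) ≤ c * (1 - δ) :=
        mul_le_mul_of_nonneg_right hb' h1δ.le
      have h4 : L * (1 - δ)^n ≤ L * 1 :=
        mul_le_mul_of_nonneg_left hp1 hL.le
      have h5 : L * (1 - δ)^n * (1 - δ) ≤ L * 1 * (1 - δ) :=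
        mul_le_mul_of_nonneg_right h4 h1δ.le
      have key : (1 + (S + L)) * (1 - δ) ^ (n+1)
          = ((1 + S) * (1-δ)^n * (1-δ)) + L * (1-δ)^n * (1-δ) := by ring
      rw [key]
      linarith

theorem daugavetWrt_norming_gives_functionals_in_slices
    (X : Type*) [NormedAddCommGroup X] [NormedSpace ℝ X] [CompleteSpace X]
    (Y : Subspace ℝ (StrongDual ℝ X))
    (hnorming : IsNorming X Y) (hD : DaugavetWrt X Y)
    (n : ℕ) (x : Fin n → X) (hx : ∀ i, ‖x i‖ = 1)
    (ε : ℝ) (hε : 0 < ε)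
    (lam : Fin n → ℝ) (hlam : ∀ i, 0 < lam i) (hsum : ∑ i, lam i = 1)
    (g : StrongDual ℝ X) (hgY : g ∈ Y) (hg : ‖g‖ = 1) :
    ∃ f : Fin n → StrongDual ℝ X,
      (∀ i, f i ∈ Y ∧ ‖f i‖ = 1 ∧ f i ∈ wSlice (x i) ε) ∧
      2 - ε ≤ ‖g + ∑ i, lam i • f i‖ := by
  rcases Nat.eq_zero_or_pos n with hn | hn
  · subst hn; simp at hsum
  · have hn1 : (1 : ℝ) ≤ (n : ℝ) := by exact_mod_cast hn
    set δ := min (ε / (2 * n)) (1/4) with hδdef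
    have hδpos : 0 < δ := lt_min (by positivity) (by norm_num)
    have hδ4 : δ ≤ 1/4 := min_le_right _ _
    have hδε2 : δ ≤ ε / (2 * n) := min_le_left _ _
    have hnδ : (n : ℝ) * δ ≤ ε / 2 := by
      have h1 : (n : ℝ) * δ ≤ (n : ℝ) * (ε / (2 * n)) :=
        mul_le_mul_of_nonneg_left hδε2 (by positivity)
      have h2 : (n : ℝ) * (ε / (2 * n)) = ε / 2 := by
        field_simp
      linarith
    have hδε : δ ≤ ε := by nlinarith
    obtain ⟨f, hf, hbound⟩ := lemB hnorming hD n x hx lam hlam g hgY hg δ hδpos hδ4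
    refine ⟨f, ?_, ?_⟩
    · intro i
      obtain ⟨h1, h2, h3⟩ := hf i
      exact ⟨h1, h2, h2.le, by linarith⟩
    · rw [hsum] at hbound
      have hbern : 1 + (n : ℝ) * (-δ) ≤ (1 + (-δ)) ^ n :=
        one_add_mul_le_pow (by linarith) n
      have heq : (1 + (-δ)) = 1 - δ := by ring
      rw [heq] at hbern
      have hfinal : 2 - ε ≤ (1 + 1) * (1 - δ) ^ n := by nlinarith
      linarith
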